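/- arXiv:2306.08481 — 2 statements merged into one kernel-verified Lean document; each statement's English description precedes it below -/
import Mathlib

section
/- Let K be a field, V a finite-dimensional K-vector space, and v_1,…,v_n ∈ V. Suppose the nonzero vectors among the v_i are partitioned by the relation i ∼ j ⟺ K·v_i = K·v_j into equivalence classes E_1,…,E_q of sizes ≥ 2 (the proper classes) together with singleton classes, and let E_0 = { i : v_i = 0 }. Assume that span_K(v_1,…,v_n) = W and that for each proper class, all its vectors are pairwise nonzero scalar multiples of each other such that differences v_i − v_j lie in W for i,j in the same class with v_i = v_j. If Z ⊆ {1,…,n} is such that the images of { e_i : i ∉ Z } span K^n / U, where U = span of the relations, then Z contains no index i with v_i a 'basic' vector, i.e., an index whose class is a singleton with v_i ≠ 0. -/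
/-- If `U ⊆ K^n` is spanned by binomial vectors (supported on at most two
coordinates) and `i` is a basic index (nonzero residue class, not proportional
to any other residue class), then `i` belongs to no set `Z` for which the
classes of `e_k`, `k ∉ Z`, span `K^n / U`. -/
theorem stmt_5 {K : Type*} [Field K] {n : ℕ}
    (U : Submodule K (Fin n → K))
    (hbin : ∃ G : Set (Fin n → K), U = Submodule.span K G ∧
      ∀ w ∈ G, ∃ a b : Fin n, ∀ j, j ≠ a → j ≠ b → w j = 0)
    (i : Fin n)
    (hi0 : U.mkQ (Pi.single i (1 : K)) ≠ 0)
    (hibasic : ∀ j : Fin n, j ≠ i →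
      Submodule.span K {U.mkQ (Pi.single i (1 : K))} ≠
        Submodule.span K {U.mkQ (Pi.single j (1 : K))})
    (Z : Finset (Fin n))
    (hZ : Submodule.span K
        (Set.range fun k : {k : Fin n // k ∉ Z} =>
          U.mkQ (Pi.single (k : Fin n) (1 : K))) = ⊤) :
    i ∉ Z := by
  classical
  intro hiZ
  obtain ⟨G, hUG, hG⟩ := hbin
  set e : Fin n → (Fin n → K) := fun j => Pi.single j (1 : K) with he
  have hmem : U.mkQ (e i) ∈ Submodule.span K
      (Set.range fun k : {k : Fin n // k ∉ Z} => U.mkQ (e (k : Fin n))) := by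
    rw [hZ]; trivial
  obtain ⟨c, hc⟩ := (Finsupp.mem_span_range_iff_exists_finsupp).1 hmem
  set w : Fin n → K := (c.sum fun k a => a • e (k : Fin n)) - e i with hw
  have hwU : w ∈ U := by
    have hq : U.mkQ w = 0 := by
      rw [hw, map_sub, map_finsuppSum]
      simp only [map_smul]
      rw [hc, sub_self]
    rwa [← Submodule.ker_mkQ U, LinearMap.mem_ker]
  have hwi : w i = -1 := by
    have h1 : (c.sum fun k a => a • e (k : Fin n)) i = 0 := by
      rw [Finsupp.sum, Finset.sum_apply]
      apply Finset.sum_eq_zero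
      intro k _
      have hk : (k : Fin n) ≠ i := by
        intro h; exact k.2 (h ▸ hiZ)
      simp [he, Pi.single_eq_of_ne (Ne.symm hk)]
    rw [hw, Pi.sub_apply, h1]; simp [he]
  -- find a generator g with g i ≠ 0
  have hex : ∃ g ∈ G, g i ≠ 0 := by
    by_contra hno
    push_neg at hno
    have hle : U ≤ LinearMap.ker (LinearMap.proj (R := K) (φ := fun _ : Fin n => K) i) := by
      rw [hUG]
      apply Submodule.span_le.2
      intro g hg
      simpa [LinearMap.mem_ker] using hno g hg
    have := hle hwU
    simp only [LinearMap.mem_ker, LinearMap.proj_apply] at this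
    rw [hwi] at this
    exact one_ne_zero (neg_eq_zero.mp this)
  obtain ⟨g, hgG, hgi⟩ := hex
  obtain ⟨a, b, hab⟩ := hG g hgG
  have hgU : g ∈ U := hUG ▸ Submodule.subset_span hgG
  have hgq : U.mkQ g = 0 := by
    rwa [← Submodule.ker_mkQ U, LinearMap.mem_ker] at hgU
  by_cases hsingle : ∀ j : Fin n, j ≠ i → g j = 0
  · -- g = g i • e_i, so mkQ e_i = 0
    have hgeq : g = g i • e i := by
      funext j
      by_cases hj : j = i
      · subst hj; simp [he, Pi.single_eq_same]
      · simp [he, hsingle j hj, Pi.single_eq_of_ne hj]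
    apply hi0
    rw [hgeq, map_smul] at hgq
    exact (smul_eq_zero.mp hgq).resolve_left hgi
  · push_neg at hsingle
    obtain ⟨j, hji, hgj⟩ := hsingle
    have hia : i = a ∨ i = b := by
      by_contra h; push_neg at h; exact hgi (hab i h.1 h.2)
    have hja : j = a ∨ j = b := by
      by_contra h; push_neg at h; exact hgj (hab j h.1 h.2)
    have hsupp : ∀ k : Fin n, k ≠ i → k ≠ j → g k = 0 := by
      intro k hki hkj
      rcases hia with rfl | rfl
      · rcases hja with rfl | rfl
        · exact absurd rfl hji
        · exact hab k hki hkj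
      · rcases hja with rfl | rfl
        · exact hab k hkj hki
        · exact absurd rfl hji
    have hgeq : g = g i • e i + g j • e j := by
      funext k
      by_cases hk : k = i
      · subst hk; simp [he, Pi.single_eq_same, Pi.single_eq_of_ne (Ne.symm hji)]
      · by_cases hk' : k = j
        · subst hk'; simp [he, Pi.single_eq_same, Pi.single_eq_of_ne hji]
        · simp [he, hsupp k hk hk', Pi.single_eq_of_ne hk, Pi.single_eq_of_ne hk']
    rw [hgeq, map_add, map_smul, map_smul] at hgq
    have h2 : g i • U.mkQ (e i) = (-(g j)) • U.mkQ (e j) := by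
      rw [neg_smul]
      exact eq_neg_of_add_eq_zero_left hgq
    have hrel : U.mkQ (e i) = ((g i)⁻¹ * (-(g j))) • U.mkQ (e j) := by
      rw [mul_smul, ← h2, inv_smul_smul₀ hgi]
    apply hibasic j hji
    rw [show Pi.single i (1 : K) = e i from rfl, show Pi.single j (1 : K) = e j from rfl,
      hrel, Submodule.span_singleton_smul_eq]
    exact isUnit_iff_ne_zero.2 (mul_ne_zero (inv_ne_zero hgi) (neg_ne_zero.2 hgj))
end

section
/- Let K be a field and A ∈ Mat_{s,n}(K) with rank s. Then there exists at least one s-element subset S ⊆ {1,…,n} such that the s×s submatrix A_S (columns indexed by S) is invertible; consequently the Gröbner fan of a linear ideal generated by s linearly independent linear forms is nonempty and its cardinality equals the number of invertible maximal square submatrices of A. -/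
open Submodule Set Module Matrix

section aux
variable {K : Type*} [Field K]

lemma aux_li_comp_iff {ι M M' : Type*} [AddCommGroup M] [AddCommGroup M']
    [Module K M] [Module K M'] {v : ι → M} (hv : LinearIndependent K v) (f : M →ₗ[K] M') :
    LinearIndependent K (⇑f ∘ v) ↔ Disjoint (span K (Set.range v)) (LinearMap.ker f) := by
  constructor
  · intro h
    rw [disjoint_iff_inf_le]
    rintro x ⟨hx1, hx2⟩
    rw [SetLike.mem_coe, ← Finsupp.range_linearCombination] at hx1
    obtain ⟨l, rfl⟩ := hx1
    have h0 : Finsupp.linearCombination K (⇑f ∘ v) l = 0 := by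
      rw [← Finsupp.apply_linearCombination]
      exact hx2
    have := linearIndependent_iff.1 h l h0
    simp [this]
  · intro h
    exact hv.map h

lemma aux_ker_funLeft {n s : ℕ} (S : Finset (Fin n)) (g : Fin s → Fin n)
    (hg : ∀ j, g j ∈ S) (hg2 : ∀ j ∈ S, ∃ i, g i = j) :
    LinearMap.ker (LinearMap.funLeft K K g) =
      span K ((fun j => Pi.single j (1 : K)) '' ↑(Sᶜ)) := by
  apply le_antisymm
  · intro v hv
    have hv' : ∀ j ∈ S, v j = 0 := by
      intro j hj
      obtain ⟨i, rfl⟩ := hg2 j hj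
      exact congrFun (LinearMap.mem_ker.1 hv) i
    have hv2 : v = ∑ j : Fin n, Pi.single j (v j) := (Finset.univ_sum_single v).symm
    rw [hv2]
    refine Submodule.sum_mem _ fun j _ => ?_
    by_cases hj : j ∈ S
    · rw [hv' j hj, Pi.single_zero]; exact Submodule.zero_mem _
    · have hsm : Pi.single j (v j) = v j • (Pi.single j (1 : K) : Fin n → K) := by
        ext k
        by_cases hk : k = j <;> simp [Pi.single_apply, hk]
      rw [hsm]
      exact Submodule.smul_mem _ _ (Submodule.subset_span ⟨j, by simpa using hj, rfl⟩)
  · rw [Submodule.span_le]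
    rintro _ ⟨j, hj, rfl⟩
    rw [SetLike.mem_coe, LinearMap.mem_ker]
    have hne : ∀ i, g i ≠ j := by
      rintro i rfl
      exact (Finset.mem_compl.1 (by simpa using hj)) (hg i)
    show (Pi.single j (1 : K)) ∘ g = 0
    funext i
    exact Pi.single_eq_of_ne (hne i) 1

end aux

/-- A matrix with `s` linearly independent rows has at least one invertible
`s × s` submatrix of columns; consequently the Gröbner fan of the linear
ideal (identified via the complements projecting to bases of the quotient)
is nonempty and its cardinality equals the number of nonzero maximal minors. -/
theorem stmt_19 {K : Type*} [Field K] {s n : ℕ}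
    (A : Matrix (Fin s) (Fin n) K) (hA : LinearIndependent K A) :
    {S : Finset (Fin n) | ∃ h : S.card = s,
        IsUnit (A.submatrix id
          (fun j : Fin s => ((S.orderIsoOfFin h j : S) : Fin n))).det}.Nonempty ∧
      Set.ncard {B : Finset (Fin n) | B.card = n - s ∧
          LinearIndependent K
            (fun j : {j : Fin n // j ∈ B} =>
              (Submodule.span K (Set.range A)).mkQ (Pi.single (j : Fin n) (1 : K))) ∧
          Submodule.span K
            (Set.range fun j : {j : Fin n // j ∈ B} =>
              (Submodule.span K (Set.range A)).mkQ (Pi.single (j : Fin n) (1 : K))) = ⊤} =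
        Set.ncard {S : Finset (Fin n) | ∃ h : S.card = s,
          IsUnit (A.submatrix id
            (fun j : Fin s => ((S.orderIsoOfFin h j : S) : Fin n))).det} := by
  classical
  set R : Submodule K (Fin n → K) := Submodule.span K (Set.range A) with hRdef
  set e : Fin n → (Fin n → K) := fun j => Pi.single j (1 : K) with hedef
  have he : LinearIndependent K e := by
    have := (Pi.basisFun K (Fin n)).linearIndependent
    convert this using 1
    funext j
    rw [Pi.basisFun_apply]
  have hsn : s ≤ n := by
    have := hA.fintype_card_le_finrank
    simpa [Module.finrank_pi] using this
  have hfrR : finrank K R = s := by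
    simpa using finrank_span_eq_card hA
  have hfrtot : finrank K (Fin n → K) = n := by simp [Module.finrank_pi]
  -- key iff for the minors
  have hkey : ∀ (S : Finset (Fin n)) (h : S.card = s),
      IsUnit (A.submatrix id
          (fun j : Fin s => ((S.orderIsoOfFin h j : S) : Fin n))).det ↔
        Disjoint R (span K (e '' ↑(Sᶜ))) := by
    intro S h
    set g : Fin s → Fin n := fun j => ((S.orderIsoOfFin h j : S) : Fin n) with hgdef
    have hgmem : ∀ j, g j ∈ S := fun j => (S.orderIsoOfFin h j).2
    have hgsurj : ∀ j ∈ S, ∃ i, g i = j := fun j hj =>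
      ⟨(S.orderIsoOfFin h).symm ⟨j, hj⟩, congrArg Subtype.val ((S.orderIsoOfFin h).apply_symm_apply ⟨j, hj⟩)⟩
    rw [← Matrix.isUnit_iff_isUnit_det, ← Matrix.linearIndependent_rows_iff_isUnit]
    have hrows : (A.submatrix id g).row = (⇑(LinearMap.funLeft K K g) ∘ A) := rfl
    rw [hrows, aux_li_comp_iff hA, aux_ker_funLeft S g hgmem hgsurj]
  -- dimension facts for finsets B
  have hTfr : ∀ B : Finset (Fin n), finrank K (span K (e '' ↑B)) = B.card := by
    intro B
    have hli : LinearIndependent K (fun j : {j : Fin n // j ∈ B} => e ↑j) :=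
      he.comp Subtype.val Subtype.val_injective
    have hr : Set.range (fun j : {j : Fin n // j ∈ B} => e ↑j) = e '' ↑B := by
      rw [show (fun j : {j : Fin n // j ∈ B} => e ↑j) = e ∘ Subtype.val from rfl,
        Set.range_comp, Subtype.range_coe_subtype]
      rfl
    have := finrank_span_eq_card hli
    rwa [hr, Fintype.card_coe] at this
  have hdim : ∀ B : Finset (Fin n), B.card = n - s →
      (Disjoint R (span K (e '' ↑B)) ↔ R ⊔ span K (e '' ↑B) = ⊤) := by
    intro B hB
    set T := span K (e '' ↑B) with hTdef
    have hfrT : finrank K T = n - s := by rw [hTdef, hTfr B, hB]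
    have hsum := Submodule.finrank_sup_add_finrank_inf_eq R T
    constructor
    · intro hd
      apply Submodule.eq_top_of_finrank_eq
      rw [hfrtot]
      have : R ⊓ T = ⊥ := disjoint_iff.1 hd
      rw [this, finrank_bot, add_zero, hfrR, hfrT] at hsum
      omega
    · intro htop
      rw [disjoint_iff]
      have : finrank K ↥(R ⊔ T) = n := by rw [htop, finrank_top, hfrtot]
      rw [this, hfrR, hfrT] at hsum
      have h0 : finrank K ↥(R ⊓ T) = 0 := by omega
      exact Submodule.finrank_eq_zero.1 h0
  -- quotient side iff
  have hQ : ∀ B : Finset (Fin n), B.card = n - s →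
      ((LinearIndependent K
          (fun j : {j : Fin n // j ∈ B} => R.mkQ (e ↑j)) ∧
        Submodule.span K
          (Set.range fun j : {j : Fin n // j ∈ B} => R.mkQ (e ↑j)) = ⊤) ↔
        Disjoint R (span K (e '' ↑B))) := by
    intro B hB
    have hli : LinearIndependent K (fun j : {j : Fin n // j ∈ B} => e ↑j) :=
      he.comp Subtype.val Subtype.val_injective
    have hr : Set.range (fun j : {j : Fin n // j ∈ B} => e ↑j) = e '' ↑B := by
      rw [show (fun j : {j : Fin n // j ∈ B} => e ↑j) = e ∘ Subtype.val from rfl,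
        Set.range_comp, Subtype.range_coe_subtype]
      rfl
    have h1 : LinearIndependent K (fun j : {j : Fin n // j ∈ B} => R.mkQ (e ↑j)) ↔
        Disjoint R (span K (e '' ↑B)) := by
      rw [show (fun j : {j : Fin n // j ∈ B} => R.mkQ (e ↑j)) =
          ⇑R.mkQ ∘ (fun j : {j : Fin n // j ∈ B} => e ↑j) from rfl,
        aux_li_comp_iff hli, hr, Submodule.ker_mkQ, disjoint_comm]
    have h2 : Submodule.span K
        (Set.range fun j : {j : Fin n // j ∈ B} => R.mkQ (e ↑j)) = ⊤ ↔
        R ⊔ span K (e '' ↑B) = ⊤ := by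
      rw [show (fun j : {j : Fin n // j ∈ B} => R.mkQ (e ↑j)) =
          ⇑R.mkQ ∘ (fun j : {j : Fin n // j ∈ B} => e ↑j) from rfl,
        Set.range_comp, hr, ← Submodule.map_span, Submodule.map_mkQ_eq_top]
    rw [h1, h2, ← hdim B hB, and_self]
  have hPiff : ∀ S : Finset (Fin n),
      (∃ h : S.card = s, IsUnit (A.submatrix id
        (fun j : Fin s => ((S.orderIsoOfFin h j : S) : Fin n))).det) ↔
      (S.card = s ∧ Disjoint R (span K (e '' ↑(Sᶜ)))) := by
    intro S
    constructor
    · rintro ⟨h, hu⟩; exact ⟨h, (hkey S h).1 hu⟩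
    · rintro ⟨h, hd⟩; exact ⟨h, (hkey S h).2 hd⟩
  have hQiff : ∀ B : Finset (Fin n),
      (B.card = n - s ∧ LinearIndependent K
          (fun j : {j : Fin n // j ∈ B} => R.mkQ (e ↑j)) ∧
        Submodule.span K
          (Set.range fun j : {j : Fin n // j ∈ B} => R.mkQ (e ↑j)) = ⊤) ↔
      (B.card = n - s ∧ Disjoint R (span K (e '' ↑B))) := by
    intro B
    constructor
    · rintro ⟨hB, h1, h2⟩; exact ⟨hB, (hQ B hB).1 ⟨h1, h2⟩⟩
    · rintro ⟨hB, hd⟩; exact ⟨hB, ((hQ B hB).2 hd).1, ((hQ B hB).2 hd).2⟩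
  have hBP : ∀ B : Finset (Fin n),
      (B.card = n - s ∧ LinearIndependent K
          (fun j : {j : Fin n // j ∈ B} => R.mkQ (e ↑j)) ∧
        Submodule.span K
          (Set.range fun j : {j : Fin n // j ∈ B} => R.mkQ (e ↑j)) = ⊤) ↔
      (∃ h : Bᶜ.card = s, IsUnit (A.submatrix id
        (fun j : Fin s => ((Bᶜ.orderIsoOfFin h j : (Bᶜ : Finset (Fin n))) : Fin n))).det) := by
    intro B
    rw [hQiff B, hPiff Bᶜ, compl_compl]
    have h1 : Bᶜ.card = n - B.card := by simp [Finset.card_compl]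
    have h2 : B.card ≤ n := by simpa using B.card_le_univ
    constructor
    · rintro ⟨hB, hd⟩; exact ⟨by omega, hd⟩
    · rintro ⟨hB, hd⟩; exact ⟨by omega, hd⟩
  constructor
  · -- Nonempty
    have hAr : A.rank = s := by rw [hA.rank_matrix, Fintype.card_fin]
    have hAt : Aᵀ.rank = s := by rw [Matrix.rank_transpose, hAr]
    have hspanT : span K (Set.range Aᵀ) = ⊤ := by
      apply Submodule.eq_top_of_finrank_eq
      rw [show span K (Set.range Aᵀ) = span K (Set.range Aᵀ.row) from rfl,
        ← Matrix.rank_eq_finrank_span_row Aᵀ, hAt]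
      simp [Module.finrank_pi]
    obtain ⟨t, hts, htspan, htLI⟩ := exists_linearIndependent K (Set.range Aᵀ)
    rw [hspanT] at htspan
    have htfin : t.Finite := (Set.finite_range Aᵀ).subset hts
    haveI := htfin.fintype
    have htcard : Fintype.card t = s := by
      have h1 := finrank_span_eq_card htLI
      rw [Subtype.range_coe, htspan, finrank_top] at h1
      rw [← h1]
      simp [Module.finrank_pi]
    choose φ hφ using fun x : t => hts x.2
    have hφinj : Function.Injective φ := fun x y hxy =>
      Subtype.val_injective (by rw [← hφ x, ← hφ y, hxy])
    set S : Finset (Fin n) := Finset.univ.image φ with hSdef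
    have hS : S.card = s := by
      rw [hSdef, Finset.card_image_of_injective _ hφinj, Finset.card_univ, htcard]
    refine ⟨S, hS, ?_⟩
    set g : Fin s → Fin n := fun j => ((S.orderIsoOfFin hS j : S) : Fin n) with hgdef
    have hgmem : ∀ j, g j ∈ S := fun j => (S.orderIsoOfFin hS j).2
    have hmemt : ∀ j, Aᵀ (g j) ∈ t := by
      intro j
      obtain ⟨x, -, hx⟩ := Finset.mem_image.1 (hgmem j)
      rw [← hx, hφ]
      exact x.2
    have hginj : Function.Injective g :=
      fun a b hab => (S.orderIsoOfFin hS).injective (Subtype.val_injective hab)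
    set ψ : Fin s → t := fun j => ⟨Aᵀ (g j), hmemt j⟩ with hψdef
    have hψinj : Function.Injective ψ := by
      intro a b hab
      have hval : Aᵀ (g a) = Aᵀ (g b) := congrArg Subtype.val hab
      obtain ⟨x, -, hx⟩ := Finset.mem_image.1 (hgmem a)
      obtain ⟨y, -, hy⟩ := Finset.mem_image.1 (hgmem b)
      have hxy : x = y := Subtype.val_injective
        (by rw [← hφ x, ← hφ y, hx, hy]; exact hval)
      apply hginj
      rw [← hx, ← hy, hxy]
    have hcols : LinearIndependent K (fun j => (A.submatrix id g)ᵀ j) := by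
      have hh : (fun j => (A.submatrix id g)ᵀ j) = ((↑) : t → (Fin s → K)) ∘ ψ := rfl
      rw [hh]
      exact htLI.comp ψ hψinj
    exact (Matrix.isUnit_iff_isUnit_det _).1
      (Matrix.linearIndependent_cols_iff_isUnit.1 hcols)
  · -- cardinality
    have hset : {B : Finset (Fin n) | B.card = n - s ∧
        LinearIndependent K
          (fun j : {j : Fin n // j ∈ B} =>
            (Submodule.span K (Set.range A)).mkQ (Pi.single (j : Fin n) (1 : K))) ∧
        Submodule.span K
          (Set.range fun j : {j : Fin n // j ∈ B} =>
            (Submodule.span K (Set.range A)).mkQ (Pi.single (j : Fin n) (1 : K))) = ⊤} =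
        (fun S : Finset (Fin n) => Sᶜ) ''
          {S : Finset (Fin n) | ∃ h : S.card = s,
            IsUnit (A.submatrix id
              (fun j : Fin s => ((S.orderIsoOfFin h j : S) : Fin n))).det} := by
      ext B
      simp only [Set.mem_setOf_eq, Set.mem_image]
      constructor
      · intro hB
        exact ⟨Bᶜ, (hBP B).1 hB, compl_compl B⟩
      · rintro ⟨S, hSm, rfl⟩
        exact (hBP Sᶜ).2 (by rw [compl_compl]; exact hSm)
    rw [hset, Set.ncard_image_of_injective _ compl_injective]
end
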